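/- For every t ∈ (0,1) and every x ∈ ℝ^d, the trace of the Hessian of log ρ_t satisfies the lower bound tr(∇² log ρ_t(x)) ≥ −d/t. -/

import Mathlib

set_option synthInstance.maxHeartbeats 1000000
set_option maxHeartbeats 1000000


open MeasureTheory Real Filter
open scoped ENNReal

noncomputable section

/-- Density at `x` of the Gaussian distribution `N(√(1-t)·x₀, t·I_d)`, i.e. the transition
density of `X_t = √(1-t)·X₀ + √t·Z` given `X₀ = x₀`. -/
def heatKernel (d : ℕ) (t : ℝ) (x x₀ : EuclideanSpace ℝ (Fin d)) : ℝ :=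
  (2 * π * t) ^ (-(d : ℝ) / 2) * Real.exp (-‖x - Real.sqrt (1 - t) • x₀‖ ^ 2 / (2 * t))

/-- The density `ρ_t` of `X_t = √(1-t)·X₀ + √t·Z` where `X₀ ∼ μ` and `Z ∼ N(0, I_d)`
is independent of `X₀`. -/
def rho (d : ℕ) (μ : Measure (EuclideanSpace ℝ (Fin d))) (t : ℝ)
    (x : EuclideanSpace ℝ (Fin d)) : ℝ :=
  ∫ x₀, heatKernel d t x x₀ ∂μ

/-- Density of the standard Gaussian `N(0, I_d)` on `ℝ^d`. -/
def stdGaussianDensity (d : ℕ) (z : EuclideanSpace ℝ (Fin d)) : ℝ :=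
  (2 * π) ^ (-(d : ℝ) / 2) * Real.exp (-‖z‖ ^ 2 / 2)

/-- Conditional expectation `E[f(X_t) | X₀ = x₀] = E_{Z ∼ N(0,I_d)}[f(√(1-t)·x₀ + √t·Z)]`. -/
def condExpX0 (d : ℕ) (t : ℝ) (x₀ : EuclideanSpace ℝ (Fin d))
    (f : EuclideanSpace ℝ (Fin d) → ℝ) : ℝ :=
  ∫ z, f (Real.sqrt (1 - t) • x₀ + Real.sqrt t • z) * stdGaussianDensity d z

/-- Trace of the Hessian of `f : ℝ^d → ℝ` at `x`, i.e. `∑ᵢ ∂²f/∂xᵢ² (x)`. -/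
def traceHessian (d : ℕ) (f : EuclideanSpace ℝ (Fin d) → ℝ)
    (x : EuclideanSpace ℝ (Fin d)) : ℝ :=
  ∑ i : Fin d,
    fderiv ℝ (fun y => fderiv ℝ f y (EuclideanSpace.single i 1)) x (EuclideanSpace.single i 1)

namespace ClaimAux

variable {d : ℕ} {t : ℝ}

def C (d : ℕ) (t : ℝ) : ℝ := (2 * π * t) ^ (-(d : ℝ) / 2)

lemma C_pos (ht : 0 < t) : 0 < C d t := Real.rpow_pos_of_pos (by positivity) _

lemma hk_def (y x₀ : EuclideanSpace ℝ (Fin d)) :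
    heatKernel d t y x₀
      = C d t * Real.exp (-‖y - Real.sqrt (1 - t) • x₀‖ ^ 2 / (2 * t)) := rfl

lemma hk_pos (ht : 0 < t) (y x₀ : EuclideanSpace ℝ (Fin d)) : 0 < heatKernel d t y x₀ :=
  mul_pos (C_pos ht) (Real.exp_pos _)

lemma hk_le (ht : 0 < t) (y x₀ : EuclideanSpace ℝ (Fin d)) : heatKernel d t y x₀ ≤ C d t := by
  rw [hk_def]
  nth_rewrite 2 [← mul_one (C d t)]
  have h2t : (0:ℝ) ≤ 2 * t := by linarith
  have harg : -‖y - Real.sqrt (1 - t) • x₀‖ ^ 2 / (2 * t) ≤ 0 :=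
    div_nonpos_iff.mpr (Or.inr ⟨neg_nonpos.mpr (sq_nonneg _), h2t⟩)
  exact mul_le_mul_of_nonneg_left (Real.exp_le_one_iff.mpr harg) (C_pos ht).le

lemma key {τ : ℝ} (hτ : 0 < τ) {s : ℝ} (hs : 0 ≤ s) : s * Real.exp (-(s / τ)) ≤ τ := by
  have h1 : s / τ ≤ Real.exp (s / τ) := by linarith [Real.add_one_le_exp (s / τ)]
  have h2 : s ≤ τ * Real.exp (s / τ) := by
    calc s = τ * (s / τ) := by field_simp
    _ ≤ τ * Real.exp (s / τ) := by gcongr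
  calc s * Real.exp (-(s / τ)) ≤ (τ * Real.exp (s / τ)) * Real.exp (-(s / τ)) :=
        mul_le_mul_of_nonneg_right h2 (Real.exp_pos _).le
  _ = τ * Real.exp (s / τ + -(s / τ)) := by rw [Real.exp_add]; ring
  _ = τ := by simp

lemma norm_mul_hk_le (ht : 0 < t) (y x₀ : EuclideanSpace ℝ (Fin d)) :
    ‖y - Real.sqrt (1 - t) • x₀‖ * heatKernel d t y x₀ ≤ C d t * Real.sqrt t := by
  set n : ℝ := ‖y - Real.sqrt (1 - t) • x₀‖ with hn
  have h1 : n ^ 2 * Real.exp (-(n ^ 2 / t)) ≤ t := key ht (sq_nonneg n)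
  have h2 : n * Real.exp (-n ^ 2 / (2 * t)) = Real.sqrt (n ^ 2 * Real.exp (-(n ^ 2 / t))) := by
    rw [Real.sqrt_mul (sq_nonneg n), Real.sqrt_sq (norm_nonneg _), ← Real.exp_half]
    congr 1
    ring
  rw [hk_def, ← hn]
  calc n * (C d t * Real.exp (-n ^ 2 / (2 * t)))
      = C d t * (n * Real.exp (-n ^ 2 / (2 * t))) := by ring
  _ ≤ C d t * Real.sqrt t := by
      rw [h2]
      exact mul_le_mul_of_nonneg_left (Real.sqrt_le_sqrt h1) (C_pos ht).le

lemma normsq_mul_hk_le (ht : 0 < t) (y x₀ : EuclideanSpace ℝ (Fin d)) :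
    ‖y - Real.sqrt (1 - t) • x₀‖ ^ 2 * heatKernel d t y x₀ ≤ C d t * (2 * t) := by
  set n : ℝ := ‖y - Real.sqrt (1 - t) • x₀‖ with hn
  have h1 : n ^ 2 * Real.exp (-(n ^ 2 / (2 * t))) ≤ 2 * t := key (by linarith) (sq_nonneg n)
  rw [hk_def, ← hn]
  calc n ^ 2 * (C d t * Real.exp (-n ^ 2 / (2 * t)))
      = C d t * (n ^ 2 * Real.exp (-(n ^ 2 / (2 * t)))) := by rw [neg_div]; ring
  _ ≤ C d t * (2 * t) := mul_le_mul_of_nonneg_left h1 (C_pos ht).le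

end ClaimAux

namespace ClaimAux

variable {d : ℕ} {t : ℝ}

/-- Full derivative of `heatKernel d t · x₀`. -/
def K' (d : ℕ) (t : ℝ) (y x₀ : EuclideanSpace ℝ (Fin d)) : EuclideanSpace ℝ (Fin d) →L[ℝ] ℝ :=
  (-(1 / t) * heatKernel d t y x₀) • (innerSL ℝ (y - Real.sqrt (1 - t) • x₀))

lemma hasFDerivAt_hk (ht : 0 < t) (x₀ y : EuclideanSpace ℝ (Fin d)) :
    HasFDerivAt (fun y => heatKernel d t y x₀) (K' d t y x₀) y := by
  set m : EuclideanSpace ℝ (Fin d) := Real.sqrt (1 - t) • x₀ with hm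
  have h0 : HasFDerivAt (fun y : EuclideanSpace ℝ (Fin d) => y - m)
      (ContinuousLinearMap.id ℝ (EuclideanSpace ℝ (Fin d))) y := (hasFDerivAt_id y).sub_const m
  have h1 : HasFDerivAt (fun y : EuclideanSpace ℝ (Fin d) => ‖y - m‖ ^ 2)
      (2 • (innerSL ℝ (y - m))) y := by
    simpa using h0.norm_sq
  have h2 := (h1.const_mul (-(2 * t)⁻¹)).exp.const_mul (C d t)
  have hfun : (fun y : EuclideanSpace ℝ (Fin d) => heatKernel d t y x₀)
      = fun y => C d t * Real.exp (-(2 * t)⁻¹ * ‖y - m‖ ^ 2) := by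
    funext y
    rw [hk_def, ← hm, neg_div, div_eq_inv_mul, ← neg_mul]
  rw [hfun]
  refine h2.congr_fderiv ?_
  ext v
  simp only [K', hk_def, ← hm, ContinuousLinearMap.smul_apply, innerSL_apply_apply, smul_eq_mul,
    ContinuousLinearMap.coe_smul', Pi.smul_apply, two_smul, ContinuousLinearMap.add_apply]
  have : -‖y - m‖ ^ 2 / (2 * t) = -(2 * t)⁻¹ * ‖y - m‖ ^ 2 := by
    rw [neg_div, div_eq_inv_mul, ← neg_mul]
  rw [this]
  ring

lemma K'_norm (ht : 0 < t) (y x₀ : EuclideanSpace ℝ (Fin d)) :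
    ‖K' d t y x₀‖ ≤ C d t * Real.sqrt t / t := by
  rw [K', norm_smul (-(1 / t) * heatKernel d t y x₀)
    (innerSL ℝ (y - Real.sqrt (1 - t) • x₀)), innerSL_apply_norm]
  have hk := (hk_pos ht y x₀).le
  rw [Real.norm_eq_abs, abs_mul, abs_neg, abs_of_pos (by positivity : (0:ℝ) < 1 / t),
    abs_of_nonneg hk]
  calc 1 / t * heatKernel d t y x₀ * ‖y - Real.sqrt (1 - t) • x₀‖
      = 1 / t * (‖y - Real.sqrt (1 - t) • x₀‖ * heatKernel d t y x₀) := by ring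
  _ ≤ 1 / t * (C d t * Real.sqrt t) := by
      exact mul_le_mul_of_nonneg_left (norm_mul_hk_le ht y x₀) (by positivity)
  _ = C d t * Real.sqrt t / t := by ring

lemma K'_apply (ht : 0 < t) (i : Fin d) (y x₀ : EuclideanSpace ℝ (Fin d)) :
    K' d t y x₀ (EuclideanSpace.single i 1)
      = -(1 / t) * ((y - Real.sqrt (1 - t) • x₀) i) * heatKernel d t y x₀ := by
  simp only [K', ContinuousLinearMap.smul_apply, innerSL_apply_apply, smul_eq_mul]
  rw [EuclideanSpace.inner_single_right]
  simp
  ring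

end ClaimAux

namespace ClaimAux

variable {d : ℕ} {t : ℝ}

lemma abs_coord_le (u : EuclideanSpace ℝ (Fin d)) (i : Fin d) : |u i| ≤ ‖u‖ := by
  have h := abs_real_inner_le_norm (EuclideanSpace.single i (1:ℝ)) u
  rw [EuclideanSpace.inner_single_left] at h
  simpa using h

def G (d : ℕ) (t : ℝ) (i : Fin d) (y x₀ : EuclideanSpace ℝ (Fin d)) : ℝ :=
  -(1 / t) * ((y - Real.sqrt (1 - t) • x₀) i) * heatKernel d t y x₀

def G' (d : ℕ) (t : ℝ) (i : Fin d) (y x₀ : EuclideanSpace ℝ (Fin d)) :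
    EuclideanSpace ℝ (Fin d) →L[ℝ] ℝ :=
  (-(1 / t) * heatKernel d t y x₀) • innerSL ℝ (EuclideanSpace.single i (1:ℝ))
    + (-(1 / t) * ((y - Real.sqrt (1 - t) • x₀) i)) • K' d t y x₀

lemma hasFDerivAt_coord (i : Fin d) (m y : EuclideanSpace ℝ (Fin d)) :
    HasFDerivAt (fun y : EuclideanSpace ℝ (Fin d) => (y - m) i)
      (innerSL ℝ (EuclideanSpace.single i (1:ℝ))) y := by
  have h0 : HasFDerivAt (fun y : EuclideanSpace ℝ (Fin d) => y - m)
      (ContinuousLinearMap.id ℝ (EuclideanSpace ℝ (Fin d))) y := (hasFDerivAt_id y).sub_const m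
  have h1 := (EuclideanSpace.proj (𝕜 := ℝ) i).hasFDerivAt.comp y h0
  refine h1.congr_fderiv ?_
  ext v
  simp [innerSL_apply_apply, EuclideanSpace.inner_single_left]

lemma hasFDerivAt_G (ht : 0 < t) (i : Fin d) (x₀ y : EuclideanSpace ℝ (Fin d)) :
    HasFDerivAt (fun y => G d t i y x₀) (G' d t i y x₀) y := by
  have hc : HasFDerivAt
      (fun y : EuclideanSpace ℝ (Fin d) => -(1 / t) * ((y - Real.sqrt (1 - t) • x₀) i))
      ((-(1 / t)) • innerSL ℝ (EuclideanSpace.single i (1:ℝ))) y :=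
    (hasFDerivAt_coord i _ y).const_mul _
  have h := hc.mul (hasFDerivAt_hk ht x₀ y)
  refine h.congr_fderiv ?_
  ext v
  simp only [G', ContinuousLinearMap.add_apply, ContinuousLinearMap.smul_apply,
    ContinuousLinearMap.coe_smul', Pi.smul_apply, smul_eq_mul, innerSL_apply_apply]
  ring

lemma G'_norm (ht : 0 < t) (i : Fin d) (y x₀ : EuclideanSpace ℝ (Fin d)) :
    ‖G' d t i y x₀‖ ≤ 3 * C d t / t := by
  have hk := (hk_pos ht y x₀).le
  have habs : |(y - Real.sqrt (1 - t) • x₀) i| ≤ ‖y - Real.sqrt (1 - t) • x₀‖ :=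
    abs_coord_le _ i
  have h1 : ‖(-(1 / t) * heatKernel d t y x₀) • innerSL ℝ (EuclideanSpace.single i (1:ℝ))‖
      ≤ C d t / t := by
    rw [norm_smul (-(1 / t) * heatKernel d t y x₀)
      (innerSL ℝ (EuclideanSpace.single i (1:ℝ))), innerSL_apply_norm,
      EuclideanSpace.norm_single]
    rw [Real.norm_eq_abs, abs_mul, abs_neg, abs_of_pos (by positivity : (0:ℝ) < 1 / t),
      abs_of_nonneg hk]
    rw [norm_one, mul_one]
    calc 1 / t * heatKernel d t y x₀ ≤ 1 / t * C d t :=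
          mul_le_mul_of_nonneg_left (hk_le ht y x₀) (by positivity)
    _ = C d t / t := by ring
  have h2 : ‖(-(1 / t) * ((y - Real.sqrt (1 - t) • x₀) i)) • K' d t y x₀‖
      ≤ 2 * C d t / t := by
    rw [norm_smul (-(1 / t) * ((y - Real.sqrt (1 - t) • x₀) i)) (K' d t y x₀)]
    rw [K', norm_smul (-(1 / t) * heatKernel d t y x₀)
      (innerSL ℝ (y - Real.sqrt (1 - t) • x₀)), innerSL_apply_norm]
    rw [Real.norm_eq_abs, Real.norm_eq_abs, abs_mul, abs_mul, abs_neg,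
      abs_of_pos (by positivity : (0:ℝ) < 1 / t), abs_of_nonneg hk]
    calc 1 / t * |(y - Real.sqrt (1 - t) • x₀) i|
          * (1 / t * heatKernel d t y x₀ * ‖y - Real.sqrt (1 - t) • x₀‖)
        ≤ 1 / t * ‖y - Real.sqrt (1 - t) • x₀‖
          * (1 / t * heatKernel d t y x₀ * ‖y - Real.sqrt (1 - t) • x₀‖) := by
          have hpos : (0:ℝ) ≤ 1 / t * heatKernel d t y x₀ * ‖y - Real.sqrt (1 - t) • x₀‖ := by
            positivity
          exact mul_le_mul_of_nonneg_right
            (mul_le_mul_of_nonneg_left habs (by positivity)) hpos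
    _ = 1 / t ^ 2 * (‖y - Real.sqrt (1 - t) • x₀‖ ^ 2 * heatKernel d t y x₀) := by ring
    _ ≤ 1 / t ^ 2 * (C d t * (2 * t)) :=
          mul_le_mul_of_nonneg_left (normsq_mul_hk_le ht y x₀) (by positivity)
    _ = 2 * C d t / t := by field_simp
  calc ‖G' d t i y x₀‖ ≤ _ + _ := norm_add_le _ _
  _ ≤ C d t / t + 2 * C d t / t := add_le_add h1 h2
  _ = 3 * C d t / t := by ring

lemma G'_apply (ht : 0 < t) (i : Fin d) (y x₀ : EuclideanSpace ℝ (Fin d)) :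
    G' d t i y x₀ (EuclideanSpace.single i 1)
      = (-(1 / t) * ((y - Real.sqrt (1 - t) • x₀) i)) ^ 2 * heatKernel d t y x₀
        - (1 / t) * heatKernel d t y x₀ := by
  simp only [G', ContinuousLinearMap.add_apply, ContinuousLinearMap.smul_apply, smul_eq_mul]
  rw [K'_apply ht i y x₀]
  rw [innerSL_apply_apply, EuclideanSpace.inner_single_left]
  simp [EuclideanSpace.single_apply]
  ring

end ClaimAux

namespace ClaimAux

variable {d : ℕ} {t : ℝ}

lemma cont_sub (y : EuclideanSpace ℝ (Fin d)) :
    Continuous (fun x₀ : EuclideanSpace ℝ (Fin d) => y - Real.sqrt (1 - t) • x₀) :=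
  continuous_const.sub (continuous_const_smul _)

lemma cont_hk (y : EuclideanSpace ℝ (Fin d)) :
    Continuous (fun x₀ => heatKernel d t y x₀) := by
  simp only [hk_def]
  exact continuous_const.mul
    (((((cont_sub y).norm.pow 2).neg).div_const _).rexp)

lemma cont_coord (i : Fin d) (y : EuclideanSpace ℝ (Fin d)) :
    Continuous (fun x₀ : EuclideanSpace ℝ (Fin d) => (y - Real.sqrt (1 - t) • x₀) i) :=
  (EuclideanSpace.proj (𝕜 := ℝ) i).continuous.comp (cont_sub y)

lemma cont_K' (y : EuclideanSpace ℝ (Fin d)) :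
    Continuous (fun x₀ => K' d t y x₀) := by
  unfold K'
  exact (continuous_const.mul (cont_hk y)).smul ((innerSL ℝ).continuous.comp (cont_sub y))

lemma cont_G (i : Fin d) (y : EuclideanSpace ℝ (Fin d)) :
    Continuous (fun x₀ => G d t i y x₀) := by
  unfold G
  exact ((continuous_const.mul (cont_coord i y)).mul (cont_hk y))

lemma cont_G' (i : Fin d) (y : EuclideanSpace ℝ (Fin d)) :
    Continuous (fun x₀ => G' d t i y x₀) := by
  unfold G'
  exact ((continuous_const.mul (cont_hk y)).smul continuous_const).add
    ((continuous_const.mul (cont_coord i y)).smul (cont_K' y))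

lemma integrable_of_le {β : Type*} [NormedAddCommGroup β]
    (μ : Measure (EuclideanSpace ℝ (Fin d))) [IsFiniteMeasure μ]
    {f : EuclideanSpace ℝ (Fin d) → β} (hc : Continuous f) {M : ℝ} (h : ∀ a, ‖f a‖ ≤ M) :
    Integrable f μ :=
  ⟨hc.aestronglyMeasurable, HasFiniteIntegral.of_bounded (ae_of_all _ h)⟩

lemma integrable_hk (ht : 0 < t) (μ : Measure (EuclideanSpace ℝ (Fin d)))
    [IsFiniteMeasure μ] (y : EuclideanSpace ℝ (Fin d)) :
    Integrable (fun x₀ => heatKernel d t y x₀) μ :=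
  integrable_of_le μ (cont_hk y) (fun a => by
    rw [Real.norm_eq_abs, abs_of_pos (hk_pos ht y a)]; exact hk_le ht y a)

lemma rho_pos (ht : 0 < t) (μ : Measure (EuclideanSpace ℝ (Fin d)))
    [IsProbabilityMeasure μ] (y : EuclideanSpace ℝ (Fin d)) : 0 < rho d μ t y := by
  rw [rho]
  refine (integral_pos_iff_support_of_nonneg_ae (ae_of_all _ fun a => (hk_pos ht y a).le)
    (integrable_hk ht μ y)).mpr ?_
  have hsupp : (Function.support fun x₀ => heatKernel d t y x₀) = Set.univ :=
    Set.eq_univ_of_forall fun a => (hk_pos ht y a).ne'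
  rw [hsupp, measure_univ]
  exact zero_lt_one

lemma integrable_K' (ht : 0 < t) (μ : Measure (EuclideanSpace ℝ (Fin d)))
    [IsFiniteMeasure μ] (y : EuclideanSpace ℝ (Fin d)) :
    Integrable (fun x₀ => K' d t y x₀) μ :=
  integrable_of_le μ (cont_K' y) (fun a => K'_norm ht y a)

lemma integrable_G' (ht : 0 < t) (μ : Measure (EuclideanSpace ℝ (Fin d)))
    [IsFiniteMeasure μ] (i : Fin d) (y : EuclideanSpace ℝ (Fin d)) :
    Integrable (fun x₀ => G' d t i y x₀) μ :=
  integrable_of_le μ (cont_G' i y) (fun a => G'_norm ht i y a)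

lemma integrable_G (ht : 0 < t) (μ : Measure (EuclideanSpace ℝ (Fin d)))
    [IsFiniteMeasure μ] (i : Fin d) (y : EuclideanSpace ℝ (Fin d)) :
    Integrable (fun x₀ => G d t i y x₀) μ := by
  refine integrable_of_le μ (cont_G i y) (M := C d t * Real.sqrt t / t) (fun a => ?_)
  have hk := (hk_pos ht y a).le
  rw [Real.norm_eq_abs, G, abs_mul, abs_mul, abs_neg,
    abs_of_pos (by positivity : (0:ℝ) < 1 / t), abs_of_nonneg hk]
  calc 1 / t * |(y - Real.sqrt (1 - t) • a) i| * heatKernel d t y a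
      ≤ 1 / t * (‖y - Real.sqrt (1 - t) • a‖ * heatKernel d t y a) := by
        rw [mul_assoc]
        exact mul_le_mul_of_nonneg_left
          (mul_le_mul_of_nonneg_right (abs_coord_le _ i) hk) (by positivity)
  _ ≤ 1 / t * (C d t * Real.sqrt t) :=
        mul_le_mul_of_nonneg_left (norm_mul_hk_le ht y a) (by positivity)
  _ = C d t * Real.sqrt t / t := by ring

def rho1 (d : ℕ) (μ : Measure (EuclideanSpace ℝ (Fin d))) (t : ℝ) (i : Fin d)
    (y : EuclideanSpace ℝ (Fin d)) : ℝ :=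
  ∫ x₀, G d t i y x₀ ∂μ

lemma hasFDerivAt_rho (ht : 0 < t) (μ : Measure (EuclideanSpace ℝ (Fin d)))
    [IsProbabilityMeasure μ] (y : EuclideanSpace ℝ (Fin d)) :
    HasFDerivAt (rho d μ t) (∫ x₀, K' d t y x₀ ∂μ) y := by
  have h := hasFDerivAt_integral_of_dominated_of_fderiv_le
    (F := fun y x₀ => heatKernel d t y x₀) (F' := fun y x₀ => K' d t y x₀)
    (bound := fun _ => C d t * Real.sqrt t / t) (μ := μ) (x₀ := y) Filter.univ_mem
    (Eventually.of_forall fun y' => (cont_hk y').aestronglyMeasurable)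
    (integrable_hk ht μ y)
    ((cont_K' y).aestronglyMeasurable)
    (ae_of_all _ fun a y' _ => K'_norm ht y' a)
    (integrable_const _)
    (ae_of_all _ fun a y' _ => hasFDerivAt_hk ht a y')
  exact h

lemma hasFDerivAt_rho1 (ht : 0 < t) (μ : Measure (EuclideanSpace ℝ (Fin d)))
    [IsProbabilityMeasure μ] (i : Fin d) (y : EuclideanSpace ℝ (Fin d)) :
    HasFDerivAt (rho1 d μ t i) (∫ x₀, G' d t i y x₀ ∂μ) y := by
  have h := hasFDerivAt_integral_of_dominated_of_fderiv_le
    (F := fun y x₀ => G d t i y x₀) (F' := fun y x₀ => G' d t i y x₀)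
    (bound := fun _ => 3 * C d t / t) (μ := μ) (x₀ := y) Filter.univ_mem
    (Eventually.of_forall fun y' => (cont_G i y').aestronglyMeasurable)
    (integrable_G ht μ i y)
    ((cont_G' i y).aestronglyMeasurable)
    (ae_of_all _ fun a y' _ => G'_norm ht i y' a)
    (integrable_const _)
    (ae_of_all _ fun a y' _ => hasFDerivAt_G ht i a y')
  exact h

lemma integral_K'_apply (ht : 0 < t) (μ : Measure (EuclideanSpace ℝ (Fin d)))
    [IsProbabilityMeasure μ] (i : Fin d) (y : EuclideanSpace ℝ (Fin d)) :
    (∫ x₀, K' d t y x₀ ∂μ) (EuclideanSpace.single i 1) = rho1 d μ t i y := by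
  rw [ContinuousLinearMap.integral_apply (integrable_K' ht μ y)]
  exact integral_congr_ae (ae_of_all _ fun a => K'_apply ht i y a)

lemma integral_G'_apply (ht : 0 < t) (μ : Measure (EuclideanSpace ℝ (Fin d)))
    [IsProbabilityMeasure μ] (i : Fin d) (y : EuclideanSpace ℝ (Fin d)) :
    (∫ x₀, G' d t i y x₀ ∂μ) (EuclideanSpace.single i 1)
      = ∫ x₀, ((-(1 / t) * ((y - Real.sqrt (1 - t) • x₀) i)) ^ 2 * heatKernel d t y x₀
          - (1 / t) * heatKernel d t y x₀) ∂μ := by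
  rw [ContinuousLinearMap.integral_apply (integrable_G' ht μ i y)]
  exact integral_congr_ae (ae_of_all _ fun a => G'_apply ht i y a)

end ClaimAux

namespace ClaimAux

variable {d : ℕ} {t : ℝ}

lemma rho1_def (μ : Measure (EuclideanSpace ℝ (Fin d))) (i : Fin d)
    (y : EuclideanSpace ℝ (Fin d)) :
    rho1 d μ t i y = ∫ x₀, G d t i y x₀ ∂μ := rfl

lemma integrable_sqK (ht : 0 < t) (μ : Measure (EuclideanSpace ℝ (Fin d)))
    [IsFiniteMeasure μ] (i : Fin d) (y : EuclideanSpace ℝ (Fin d)) :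
    Integrable (fun x₀ =>
      (-(1 / t) * ((y - Real.sqrt (1 - t) • x₀) i)) ^ 2 * heatKernel d t y x₀) μ := by
  refine integrable_of_le μ
    (((continuous_const.mul (cont_coord i y)).pow 2).mul (cont_hk y))
    (M := 2 * C d t / t) (fun a => ?_)
  have hk := (hk_pos ht y a).le
  rw [Real.norm_eq_abs, abs_mul, abs_of_nonneg hk, abs_of_nonneg (sq_nonneg _)]
  have hco : ((y - Real.sqrt (1 - t) • a) i) ^ 2 ≤ ‖y - Real.sqrt (1 - t) • a‖ ^ 2 := by
    rw [← sq_abs]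
    exact pow_le_pow_left₀ (abs_nonneg _) (abs_coord_le _ i) 2
  calc (-(1 / t) * ((y - Real.sqrt (1 - t) • a) i)) ^ 2 * heatKernel d t y a
      = 1 / t ^ 2 * (((y - Real.sqrt (1 - t) • a) i) ^ 2 * heatKernel d t y a) := by ring
  _ ≤ 1 / t ^ 2 * (‖y - Real.sqrt (1 - t) • a‖ ^ 2 * heatKernel d t y a) := by
      exact mul_le_mul_of_nonneg_left (mul_le_mul_of_nonneg_right hco hk) (by positivity)
  _ ≤ 1 / t ^ 2 * (C d t * (2 * t)) :=
      mul_le_mul_of_nonneg_left (normsq_mul_hk_le ht y a) (by positivity)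
  _ = 2 * C d t / t := by field_simp

lemma cauchy (ht : 0 < t) (μ : Measure (EuclideanSpace ℝ (Fin d)))
    [IsProbabilityMeasure μ] (i : Fin d) (y : EuclideanSpace ℝ (Fin d)) :
    (rho1 d μ t i y) ^ 2
      ≤ (∫ x₀, (-(1 / t) * ((y - Real.sqrt (1 - t) • x₀) i)) ^ 2 * heatKernel d t y x₀ ∂μ)
        * rho d μ t y := by
  set P : ℝ := rho d μ t y with hP
  set Q : ℝ := rho1 d μ t i y with hQ
  set R : ℝ :=
    ∫ x₀, (-(1 / t) * ((y - Real.sqrt (1 - t) • x₀) i)) ^ 2 * heatKernel d t y x₀ ∂μ with hR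
  have hPpos : 0 < P := rho_pos ht μ y
  have i1 := integrable_sqK ht μ i y
  have i2 := (integrable_G ht μ i y).const_mul (2 * (Q / P))
  have i3 := (integrable_hk ht μ y).const_mul ((Q / P) ^ 2)
  have hexp : ∀ x₀ : EuclideanSpace ℝ (Fin d),
      (-(1 / t) * ((y - Real.sqrt (1 - t) • x₀) i)) ^ 2 * heatKernel d t y x₀
        - 2 * (Q / P) * G d t i y x₀ + (Q / P) ^ 2 * heatKernel d t y x₀
      = (-(1 / t) * ((y - Real.sqrt (1 - t) • x₀) i) - Q / P) ^ 2 * heatKernel d t y x₀ := by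
    intro x₀
    simp only [G]
    ring
  have h0 : 0 ≤ ∫ x₀,
      ((-(1 / t) * ((y - Real.sqrt (1 - t) • x₀) i)) ^ 2 * heatKernel d t y x₀
        - 2 * (Q / P) * G d t i y x₀ + (Q / P) ^ 2 * heatKernel d t y x₀) ∂μ := by
    refine integral_nonneg fun x₀ => ?_
    rw [hexp x₀]
    exact mul_nonneg (sq_nonneg _) (hk_pos ht y x₀).le
  have i12 : Integrable (fun x₀ =>
      (-(1 / t) * ((y - Real.sqrt (1 - t) • x₀) i)) ^ 2 * heatKernel d t y x₀
        - 2 * (Q / P) * G d t i y x₀) μ := i1.sub i2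
  rw [integral_add i12 i3] at h0
  rw [integral_sub i1 i2, integral_const_mul, integral_const_mul] at h0
  rw [← hR, ← rho1_def, ← hQ] at h0
  have hPint : ∫ x₀, heatKernel d t y x₀ ∂μ = P := rfl
  rw [hPint] at h0
  have e1 : R - 2 * (Q / P) * Q + (Q / P) ^ 2 * P = R - Q ^ 2 / P := by
    field_simp
    ring
  rw [e1] at h0
  have h2 : Q ^ 2 / P ≤ R := by linarith
  exact (div_le_iff₀ hPpos).mp h2

end ClaimAux


/-- **Claim 2 (lower bound).** For every `t ∈ (0,1)` and `x ∈ ℝ^d`,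
`tr(∇² log ρ_t(x)) ≥ −d/t`. -/
theorem trace_hessian_log_density_lower_bound
    (d : ℕ) (hd : 1 ≤ d) (μ : Measure (EuclideanSpace ℝ (Fin d))) [IsProbabilityMeasure μ]
    (t : ℝ) (ht₀ : 0 < t) (ht₁ : t < 1) (x : EuclideanSpace ℝ (Fin d)) :
    traceHessian d (fun y => Real.log (rho d μ t y)) x ≥ -(d / t) := by
  have hp : ∀ y, 0 < rho d μ t y := fun y => ClaimAux.rho_pos ht₀ μ y
  have hlog : ∀ y, HasFDerivAt (fun y => Real.log (rho d μ t y))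
      ((rho d μ t y)⁻¹ • ∫ x₀, ClaimAux.K' d t y x₀ ∂μ) y :=
    fun y => (ClaimAux.hasFDerivAt_rho ht₀ μ y).log (hp y).ne'
  rw [ge_iff_le, traceHessian]
  have hbound : ∀ i : Fin d,
      -(1 / t) ≤ fderiv ℝ (fun y => fderiv ℝ (fun y => Real.log (rho d μ t y)) y
        (EuclideanSpace.single i 1)) x (EuclideanSpace.single i 1) := by
    intro i
    have hFfun : (fun y => fderiv ℝ (fun y => Real.log (rho d μ t y)) y
          (EuclideanSpace.single i 1))
        = fun y => (rho d μ t y)⁻¹ * ClaimAux.rho1 d μ t i y := by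
      funext y
      rw [(hlog y).fderiv]
      rw [ContinuousLinearMap.smul_apply, ClaimAux.integral_K'_apply ht₀ μ i y, smul_eq_mul]
    rw [hFfun]
    have hinv : HasFDerivAt (fun y => (rho d μ t y)⁻¹)
        ((-(ContinuousLinearMap.mulLeftRight ℝ ℝ (rho d μ t x)⁻¹ (rho d μ t x)⁻¹)).comp
          (∫ x₀, ClaimAux.K' d t x x₀ ∂μ)) x :=
      (hasFDerivAt_inv' (hp x).ne').comp x (ClaimAux.hasFDerivAt_rho ht₀ μ x)
    have hmul := hinv.mul (ClaimAux.hasFDerivAt_rho1 ht₀ μ i x)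
    rw [show (fun y => (rho d μ t y)⁻¹ * ClaimAux.rho1 d μ t i y)
        = ((fun y => (rho d μ t y)⁻¹) * ClaimAux.rho1 d μ t i) from rfl, hmul.fderiv]
    simp only [ContinuousLinearMap.add_apply, ContinuousLinearMap.smul_apply,
      ContinuousLinearMap.comp_apply, ContinuousLinearMap.neg_apply,
      ContinuousLinearMap.mulLeftRight_apply, smul_eq_mul]
    rw [ClaimAux.integral_K'_apply ht₀ μ i x, ClaimAux.integral_G'_apply ht₀ μ i x]
    set P : ℝ := rho d μ t x with hP
    set Q : ℝ := ClaimAux.rho1 d μ t i x with hQ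
    set R : ℝ := ∫ x₀, (-(1 / t) * ((x - Real.sqrt (1 - t) • x₀) i)) ^ 2
        * heatKernel d t x x₀ ∂μ with hR
    have hPpos : 0 < P := hp x
    have hCS : Q ^ 2 ≤ R * P := ClaimAux.cauchy ht₀ μ i x
    have hsplit : (∫ x₀, ((-(1 / t) * ((x - Real.sqrt (1 - t) • x₀) i)) ^ 2
          * heatKernel d t x x₀ - 1 / t * heatKernel d t x x₀) ∂μ)
        = R - 1 / t * P := by
      rw [integral_sub (ClaimAux.integrable_sqK ht₀ μ i x)
        ((ClaimAux.integrable_hk ht₀ μ x).const_mul (1 / t)), integral_const_mul]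
      rfl
    rw [hsplit]
    have hq2 : Q ^ 2 / P ^ 2 ≤ R / P := by
      rw [div_le_div_iff₀ (by positivity) hPpos]
      nlinarith [hCS, hPpos.le]
    have e2 : P⁻¹ * (R - 1 / t * P) + Q * -(P⁻¹ * Q * P⁻¹)
        = R / P - 1 / t - Q ^ 2 / P ^ 2 := by
      field_simp
      ring
    rw [e2]
    linarith
  calc -((d : ℝ) / t) = ∑ _i : Fin d, -(1 / t) := by
        rw [Finset.sum_const, Finset.card_univ, Fintype.card_fin, nsmul_eq_mul]
        ring
  _ ≤ _ := Finset.sum_le_sum fun i _ => hbound i
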